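/- arXiv:2401.02666 — 2 statements merged into one kernel-verified Lean document; each statement's English description precedes it below -/
import Mathlib

section
/- Consider an instance of the strongly stable matching problem with closures containing doctors d₁, d₂ ∈ D and hospitals h₁, t, f ∈ H such that t, f ∈ S, h₁ ∉ S, E(d₁) = {(d₁,h₁)}, E(d₂) = {(d₂,t), (d₂,f), (d₂,h₁)}, E(h₁) = {(d₁,h₁), (d₂,h₁)}, and the preferences satisfy (d₁,h₁) ∼_{h₁} (d₂,h₁) and (d₂,t) ∼_{d₂} (d₂,f) ≻_{d₂} (d₂,h₁). Then every stable matching μ in G contains exactly one of the edges (d₂,t) and (d₂,f). -/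
open Classical

variable {D H : Type}

def edgesD (E : Set (D × H)) (d : D) : Set (D × H) := {e ∈ E | e.1 = d}

def edgesH (E : Set (D × H)) (h : H) : Set (D × H) := {e ∈ E | e.2 = h}

def optD (E : Set (D × H)) (d : D) : Set (Option (D × H)) :=
  insert none (some '' edgesD E d)

def optH (E : Set (D × H)) (h : H) : Set (Option (D × H)) :=
  insert none (some '' edgesH E h)

/-- An instance of the strongly stable matching problem with closures:
a bipartite graph between doctors `D` and hospitals `H` with edge set `E`,
a set `S` of closable hospitals, and for each vertex a transitive, total
preference relation on its incident edges together with `∅` (modelled by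
`Option`, where `none` plays the role of `∅`), such that every incident
edge is strictly preferred to `∅`. -/
structure SSMC (D H : Type) where
  E : Set (D × H)
  S : Set H
  prefD : D → Option (D × H) → Option (D × H) → Prop
  prefH : H → Option (D × H) → Option (D × H) → Prop
  prefD_trans : ∀ d, ∀ e ∈ optD E d, ∀ f ∈ optD E d, ∀ g ∈ optD E d,
    prefD d e f → prefD d f g → prefD d e g
  prefD_total : ∀ d, ∀ e ∈ optD E d, ∀ f ∈ optD E d, prefD d e f ∨ prefD d f e
  prefD_none : ∀ d, ∀ e ∈ edgesD E d, prefD d (some e) none ∧ ¬ prefD d none (some e)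
  prefH_trans : ∀ h, ∀ e ∈ optH E h, ∀ f ∈ optH E h, ∀ g ∈ optH E h,
    prefH h e f → prefH h f g → prefH h e g
  prefH_total : ∀ h, ∀ e ∈ optH E h, ∀ f ∈ optH E h, prefH h e f ∨ prefH h f e
  prefH_none : ∀ h, ∀ e ∈ edgesH E h, prefH h (some e) none ∧ ¬ prefH h none (some e)

namespace SSMC

variable (I : SSMC D H)

/-- `e ≻_d f` -/
def strictD (d : D) (e f : Option (D × H)) : Prop := I.prefD d e f ∧ ¬ I.prefD d f e

/-- `e ∼_d f` -/
def simD (d : D) (e f : Option (D × H)) : Prop := I.prefD d e f ∧ I.prefD d f e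

/-- `e ≻_h f` -/
def strictH (h : H) (e f : Option (D × H)) : Prop := I.prefH h e f ∧ ¬ I.prefH h f e

/-- `e ∼_h f` -/
def simH (h : H) (e f : Option (D × H)) : Prop := I.prefH h e f ∧ I.prefH h f e

/-- A matching: a subset of `E` with at most one edge at each vertex. -/
def isMatching (μ : Set (D × H)) : Prop :=
  μ ⊆ I.E ∧ (∀ e ∈ μ, ∀ f ∈ μ, e.1 = f.1 → e = f) ∧
    (∀ e ∈ μ, ∀ f ∈ μ, e.2 = f.2 → e = f)

end SSMC

/-- `μ(d)`: the edge of `μ` at doctor `d` (or `none`). -/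
noncomputable def muD (μ : Set (D × H)) (d : D) : Option (D × H) :=
  if h : ∃ e, e ∈ μ ∧ e.1 = d then some h.choose else none

/-- `μ(h)`: the edge of `μ` at hospital `h` (or `none`). -/
noncomputable def muH (μ : Set (D × H)) (h : H) : Option (D × H) :=
  if hh : ∃ e, e ∈ μ ∧ e.2 = h then some hh.choose else none

namespace SSMC

variable (I : SSMC D H)

/-- `e` blocks the matching `μ`: `e ∈ E \ μ`, `e` weakly blocks `μ` on both of its
endpoints and strongly blocks `μ` on at least one of them (where blocking on a
hospital `h ∈ S` additionally requires `μ(h) ≠ ∅`). -/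
def blocks (μ : Set (D × H)) (e : D × H) : Prop :=
  e ∈ I.E ∧ e ∉ μ ∧
  I.prefD e.1 (some e) (muD μ e.1) ∧
  (I.prefH e.2 (some e) (muH μ e.2) ∧ (e.2 ∈ I.S → muH μ e.2 ≠ none)) ∧
  (I.strictD e.1 (some e) (muD μ e.1) ∨
    (I.strictH e.2 (some e) (muH μ e.2) ∧ (e.2 ∈ I.S → muH μ e.2 ≠ none)))

/-- A stable matching: no edge blocks it. -/
def stable (μ : Set (D × H)) : Prop :=
  I.isMatching μ ∧ ∀ e, ¬ I.blocks μ e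

/-- `Ch_D(F)`: union over doctors `d` of the most preferred edges of `F(d)`. -/
def ChD (F : Set (D × H)) : Set (D × H) :=
  {e ∈ F | ∀ f ∈ F, f.1 = e.1 → I.prefD e.1 (some e) (some f)}

/-- `Ch_H(F)`: union over hospitals `h` of the most preferred edges of `F(h)`. -/
def ChH (F : Set (D × H)) : Set (D × H) :=
  {e ∈ F | ∀ f ∈ F, f.2 = e.2 → I.prefH e.2 (some e) (some f)}

/-- `Ch(F) = Ch_H(Ch_D(F))`. -/
def Ch (F : Set (D × H)) : Set (D × H) := I.ChH (I.ChD F)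

/-- `e ≻_d F` for a flat set `F`. -/
def dSucc (F : Set (D × H)) (e : D × H) : Prop :=
  (∀ f ∈ F, f.1 ≠ e.1) ∨ ∃ f ∈ F, f.1 = e.1 ∧ I.strictD e.1 (some e) (some f)

/-- `e ∼_d F` for a flat set `F`. -/
def dSim (F : Set (D × H)) (e : D × H) : Prop :=
  ∃ f ∈ F, f.1 = e.1 ∧ I.simD e.1 (some e) (some f)

/-- `block(F)` for a flat set `F ⊆ E`. -/
def setBlock (F : Set (D × H)) : Set (D × H) :=
  {e | e ∈ I.E ∧ e ∉ F ∧ (∃ f ∈ F, f.2 = e.2) ∧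
    (I.dSucc F e ∨ I.dSim F e) ∧
    (I.dSucc F e → ∃ f ∈ F, f.2 = e.2 ∧ I.prefH e.2 (some e) (some f)) ∧
    (I.dSim F e → ∃ f ∈ F, f.2 = e.2 ∧ I.strictH e.2 (some e) (some f))}

/-- `L = Ch(E \ R)`. -/
def Lset (R : Set (D × H)) : Set (D × H) := I.Ch (I.E \ R)

/-- The pre-processing conditions (R1)–(R5) on a pair `(R, μ)`. -/
def preproc (R μ : Set (D × H)) : Prop :=
  R ⊆ I.E ∧ I.isMatching μ ∧
  -- (R1)
  (∀ σ, I.stable σ → ∀ e ∈ R, e ∉ σ) ∧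
  -- (R2)
  μ ⊆ I.Ch (I.E \ R) ∧
  -- (R3)
  (∀ d : D, (∃ e ∈ I.E \ R, e.1 = d) → ∃ e ∈ μ, e.1 = d) ∧
  -- (R4)
  R ∩ I.setBlock (I.Ch (I.E \ R)) = ∅ ∧
  -- (R5)
  (∀ d : D, ∀ e ∈ R, e.1 = d → ∀ f ∈ I.E \ R, f.1 = d → I.prefD d (some e) (some f))

/-- `h` is a critical hospital with respect to `(R, μ)`. -/
def critical (R μ : Set (D × H)) (h : H) : Prop :=
  h ∉ I.S ∧ (∀ e ∈ μ, e.2 ≠ h) ∧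
  ((∃ e ∈ I.Ch (I.E \ R), e.2 = h) ∨ (∃ e ∈ R, e.2 = h))

/-- Assumption (★): every doctor strictly prefers any acceptable hospital
outside `S` to any acceptable hospital in `S`. -/
def starAssumption : Prop :=
  ∀ (d : D) (h h' : H), (d, h) ∈ I.E → (d, h') ∈ I.E → h ∈ I.S → h' ∉ I.S →
    I.strictD d (some (d, h')) (some (d, h))

end SSMC

lemma muD_eq_some {D H : Type} {μ : Set (D × H)}
    (hm : ∀ e ∈ μ, ∀ f ∈ μ, e.1 = f.1 → e = f)
    {e : D × H} (he : e ∈ μ) {d : D} (hed : e.1 = d) : muD μ d = some e := by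
  have hex : ∃ e, e ∈ μ ∧ e.1 = d := ⟨e, he, hed⟩
  rw [muD, dif_pos hex]
  have hc := hex.choose_spec
  exact congrArg some (hm _ hc.1 _ he (hc.2.trans hed.symm))

lemma muD_eq_none {D H : Type} {μ : Set (D × H)} {d : D}
    (h : ¬ ∃ e, e ∈ μ ∧ e.1 = d) : muD μ d = none := by
  rw [muD, dif_neg h]

lemma muH_eq_some {D H : Type} {μ : Set (D × H)}
    (hm : ∀ e ∈ μ, ∀ f ∈ μ, e.2 = f.2 → e = f)
    {e : D × H} (he : e ∈ μ) {h : H} (hed : e.2 = h) : muH μ h = some e := by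
  have hex : ∃ e, e ∈ μ ∧ e.2 = h := ⟨e, he, hed⟩
  rw [muH, dif_pos hex]
  have hc := hex.choose_spec
  exact congrArg some (hm _ hc.1 _ he (hc.2.trans hed.symm))

lemma muH_eq_none {D H : Type} {μ : Set (D × H)} {h : H}
    (hn : ¬ ∃ e, e ∈ μ ∧ e.2 = h) : muH μ h = none := by
  rw [muH, dif_neg hn]

/-- variable gadget: in an instance containing doctors
`d₁, d₂` and hospitals `h₁, t, f` with `t, f ∈ S`, `h₁ ∉ S`,
`E(d₁) = {(d₁,h₁)}`, `E(d₂) = {(d₂,t),(d₂,f),(d₂,h₁)}`,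
`E(h₁) = {(d₁,h₁),(d₂,h₁)}`, preferences `(d₁,h₁) ∼_{h₁} (d₂,h₁)` and
`(d₂,t) ∼_{d₂} (d₂,f) ≻_{d₂} (d₂,h₁)`, every stable matching contains exactly
one of `(d₂,t)` and `(d₂,f)`. -/
theorem variable_gadget {D H : Type} [Fintype D] [Fintype H]
    (I : SSMC D H) (d₁ d₂ : D) (h₁ t f : H)
    (hd : d₁ ≠ d₂) (htf : t ≠ f) (hth : t ≠ h₁) (hfh : f ≠ h₁)
    (htS : t ∈ I.S) (hfS : f ∈ I.S) (hh₁S : h₁ ∉ I.S)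
    (hE1 : edgesD I.E d₁ = {(d₁, h₁)})
    (hE2 : edgesD I.E d₂ = {(d₂, t), (d₂, f), (d₂, h₁)})
    (hEh1 : edgesH I.E h₁ = {(d₁, h₁), (d₂, h₁)})
    (hp1 : I.simH h₁ (some (d₁, h₁)) (some (d₂, h₁)))
    (hp2 : I.simD d₂ (some (d₂, t)) (some (d₂, f)))
    (hp3 : I.strictD d₂ (some (d₂, f)) (some (d₂, h₁))) :
    ∀ μ : Set (D × H), I.stable μ →
      (((d₂, t) ∈ μ ∧ (d₂, f) ∉ μ) ∨ ((d₂, f) ∈ μ ∧ (d₂, t) ∉ μ)) := by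
  intro μ hst
  obtain ⟨⟨hsub, hmD, hmH⟩, hnb⟩ := hst
  have hEh : (d₂, h₁) ∈ I.E := by
    have h : (d₂, h₁) ∈ edgesD I.E d₂ := by rw [hE2]; simp
    exact h.1
  have hE1h : (d₁, h₁) ∈ I.E := by
    have h : (d₁, h₁) ∈ edgesH I.E h₁ := by rw [hEh1]; simp
    exact h.1
  have hd21 : ((d₂, h₁) : D × H) ∈ edgesD I.E d₂ := ⟨hEh, rfl⟩
  have hd11 : ((d₁, h₁) : D × H) ∈ edgesD I.E d₁ := ⟨hE1h, rfl⟩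
  have hh21 : ((d₂, h₁) : D × H) ∈ edgesH I.E h₁ := ⟨hEh, rfl⟩
  have hh11 : ((d₁, h₁) : D × H) ∈ edgesH I.E h₁ := ⟨hE1h, rfl⟩
  by_cases hex : ∃ e, e ∈ μ ∧ e.1 = d₂
  · obtain ⟨e, heμ, hed⟩ := hex
    have hmem : e ∈ edgesD I.E d₂ := ⟨hsub heμ, hed⟩
    rw [hE2] at hmem
    simp only [Set.mem_insert_iff, Set.mem_singleton_iff] at hmem
    rcases hmem with rfl | rfl | rfl
    · left
      refine ⟨heμ, fun hf => ?_⟩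
      have := hmD _ hf _ heμ rfl
      exact htf (Prod.mk.injEq .. ▸ this).2.symm
    · right
      refine ⟨heμ, fun hf => ?_⟩
      have := hmD _ hf _ heμ rfl
      exact htf (Prod.mk.injEq .. ▸ this).2
    · -- μ(d₂) = (d₂, h₁): edge (d₁,h₁) blocks
      exfalso
      have hμh : muH μ h₁ = some (d₂, h₁) := muH_eq_some hmH heμ rfl
      have hni : (d₁, h₁) ∉ μ := by
        intro h
        have := hmH _ h _ heμ rfl
        exact hd (Prod.mk.injEq .. ▸ this).1
      have hμd : muD μ d₁ = none := by
        apply muD_eq_none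
        rintro ⟨e', he', he'd⟩
        have hmem' : e' ∈ edgesD I.E d₁ := ⟨hsub he', he'd⟩
        rw [hE1, Set.mem_singleton_iff] at hmem'
        exact hni (hmem' ▸ he')
      have hpn := I.prefD_none d₁ _ hd11
      refine hnb (d₁, h₁) ⟨hE1h, hni, ?_, ⟨?_, fun hS => absurd hS hh₁S⟩, Or.inl ?_⟩
      · rw [hμd]; exact hpn.1
      · rw [hμh]; exact hp1.1
      · rw [hμd]; exact ⟨hpn.1, hpn.2⟩
  · -- μ(d₂) = none: edge (d₂,h₁) blocks
    exfalso
    have hμd : muD μ d₂ = none := muD_eq_none hex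
    have hni : (d₂, h₁) ∉ μ := fun h => hex ⟨_, h, rfl⟩
    have hpn := I.prefD_none d₂ _ hd21
    by_cases hexh : ∃ e, e ∈ μ ∧ e.2 = h₁
    · obtain ⟨e, heμ, heh⟩ := hexh
      have hmem : e ∈ edgesH I.E h₁ := ⟨hsub heμ, heh⟩
      rw [hEh1] at hmem
      simp only [Set.mem_insert_iff, Set.mem_singleton_iff] at hmem
      rcases hmem with rfl | rfl
      · have hμh : muH μ h₁ = some (d₁, h₁) := muH_eq_some hmH heμ rfl
        refine hnb (d₂, h₁) ⟨hEh, hni, ?_, ⟨?_, fun hS => absurd hS hh₁S⟩, Or.inl ?_⟩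
        · rw [hμd]; exact hpn.1
        · rw [hμh]; exact hp1.2
        · rw [hμd]; exact ⟨hpn.1, hpn.2⟩
      · exact hni heμ
    · have hμh : muH μ h₁ = none := muH_eq_none hexh
      have hpnh := I.prefH_none h₁ _ hh21
      refine hnb (d₂, h₁) ⟨hEh, hni, ?_, ⟨?_, fun hS => absurd hS hh₁S⟩, Or.inl ?_⟩
      · rw [hμd]; exact hpn.1
      · rw [hμh]; exact hpnh.1
      · rw [hμd]; exact ⟨hpn.1, hpn.2⟩
end

section
/- Consider an instance of the strongly stable matching problem with closures containing doctors p₁, p₂, p₃, p₄, p₅ ∈ D and hospitals q₁, q₂, q₃ ∈ H with q₁, q₂, q₃ ∉ S, such that E(p₄) = {(p₄,q₁), (p₄,q₂)}, E(p₅) = {(p₅,q₁), (p₅,q₃)}, E(q₁) = {(p₁,q₁), (p₄,q₁), (p₅,q₁)}, E(q₂) = {(p₂,q₂), (p₃,q₂), (p₄,q₂)}, E(q₃) = {(p₅,q₃)}, and the preferences satisfy (p₁,q₁) ∼_{q₁} (p₄,q₁) ∼_{q₁} (p₅,q₁), (p₂,q₂) ∼_{q₂} (p₃,q₂) ∼_{q₂}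 (p₄,q₂), (p₄,q₁) ∼_{p₄} (p₄,q₂), and (p₅,q₁) ∼_{p₅} (p₅,q₃). Then every stable matching μ in G contains exactly one of the edges (p₁,q₁), (p₂,q₂), (p₃,q₂). -/
open Classical

variable {D H : Type}

section Helpers

variable {D H : Type}

lemma muD_spec {μ : Set (D × H)}
    (hm : ∀ e ∈ μ, ∀ f ∈ μ, e.1 = f.1 → e = f) {d : D} {e : D × H}
    (he : e ∈ μ) (hd : e.1 = d) : muD μ d = some e := by
  have hex : ∃ f, f ∈ μ ∧ f.1 = d := ⟨e, he, hd⟩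
  rw [muD, dif_pos hex]
  exact congrArg some (hm _ hex.choose_spec.1 _ he (hex.choose_spec.2.trans hd.symm))

lemma muD_none' {μ : Set (D × H)} {d : D}
    (h : ∀ e ∈ μ, e.1 ≠ d) : muD μ d = none := by
  rw [muD, dif_neg]
  rintro ⟨e, he, hd⟩
  exact h e he hd

lemma muH_spec {μ : Set (D × H)}
    (hm : ∀ e ∈ μ, ∀ f ∈ μ, e.2 = f.2 → e = f) {h : H} {e : D × H}
    (he : e ∈ μ) (hd : e.2 = h) : muH μ h = some e := by
  have hex : ∃ f, f ∈ μ ∧ f.2 = h := ⟨e, he, hd⟩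
  rw [muH, dif_pos hex]
  exact congrArg some (hm _ hex.choose_spec.1 _ he (hex.choose_spec.2.trans hd.symm))

lemma muH_none' {μ : Set (D × H)} {h : H}
    (hn : ∀ e ∈ μ, e.2 ≠ h) : muH μ h = none := by
  rw [muH, dif_neg]
  rintro ⟨e, he, hd⟩
  exact hn e he hd

end Helpers

/-- clause gadget: in an instance containing doctors
`p₁, …, p₅` and hospitals `q₁, q₂, q₃ ∉ S` with the indicated edge sets and
indifferences, every stable matching contains exactly one of the edges
`(p₁,q₁)`, `(p₂,q₂)`, `(p₃,q₂)`. -/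
theorem clause_gadget {D H : Type} [Fintype D] [Fintype H]
    (I : SSMC D H) (p₁ p₂ p₃ p₄ p₅ : D) (q₁ q₂ q₃ : H)
    (hp12 : p₁ ≠ p₂) (hp13 : p₁ ≠ p₃) (hp14 : p₁ ≠ p₄) (hp15 : p₁ ≠ p₅)
    (hp23 : p₂ ≠ p₃) (hp24 : p₂ ≠ p₄) (hp25 : p₂ ≠ p₅)
    (hp34 : p₃ ≠ p₄) (hp35 : p₃ ≠ p₅) (hp45 : p₄ ≠ p₅)
    (hq12 : q₁ ≠ q₂) (hq13 : q₁ ≠ q₃) (hq23 : q₂ ≠ q₃)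
    (hq1S : q₁ ∉ I.S) (hq2S : q₂ ∉ I.S) (hq3S : q₃ ∉ I.S)
    (hE4 : edgesD I.E p₄ = {(p₄, q₁), (p₄, q₂)})
    (hE5 : edgesD I.E p₅ = {(p₅, q₁), (p₅, q₃)})
    (hQ1 : edgesH I.E q₁ = {(p₁, q₁), (p₄, q₁), (p₅, q₁)})
    (hQ2 : edgesH I.E q₂ = {(p₂, q₂), (p₃, q₂), (p₄, q₂)})
    (hQ3 : edgesH I.E q₃ = {(p₅, q₃)})
    (hq1a : I.simH q₁ (some (p₁, q₁)) (some (p₄, q₁)))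
    (hq1b : I.simH q₁ (some (p₄, q₁)) (some (p₅, q₁)))
    (hq2a : I.simH q₂ (some (p₂, q₂)) (some (p₃, q₂)))
    (hq2b : I.simH q₂ (some (p₃, q₂)) (some (p₄, q₂)))
    (hp4 : I.simD p₄ (some (p₄, q₁)) (some (p₄, q₂)))
    (hp5 : I.simD p₅ (some (p₅, q₁)) (some (p₅, q₃))) :
    ∀ μ : Set (D × H), I.stable μ →
      (((p₁, q₁) ∈ μ ∧ (p₂, q₂) ∉ μ ∧ (p₃, q₂) ∉ μ) ∨
       ((p₂, q₂) ∈ μ ∧ (p₁, q₁) ∉ μ ∧ (p₃, q₂) ∉ μ) ∨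
       ((p₃, q₂) ∈ μ ∧ (p₁, q₁) ∉ μ ∧ (p₂, q₂) ∉ μ)) := by
  intro μ hst
  obtain ⟨⟨hμE, hmD, hmH⟩, hblock⟩ := hst
  -- edge memberships
  have he11 : (p₁, q₁) ∈ I.E := by
    have h : (p₁, q₁) ∈ edgesH I.E q₁ := by rw [hQ1]; simp
    exact h.1
  have he41 : (p₄, q₁) ∈ I.E := by
    have h : (p₄, q₁) ∈ edgesH I.E q₁ := by rw [hQ1]; simp
    exact h.1
  have he51 : (p₅, q₁) ∈ I.E := by
    have h : (p₅, q₁) ∈ edgesH I.E q₁ := by rw [hQ1]; simp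
    exact h.1
  have he42 : (p₄, q₂) ∈ I.E := by
    have h : (p₄, q₂) ∈ edgesH I.E q₂ := by rw [hQ2]; simp
    exact h.1
  have he53 : (p₅, q₃) ∈ I.E := by
    have h : (p₅, q₃) ∈ edgesH I.E q₃ := by rw [hQ3]; simp
    exact h.1
  -- incidence characterizations
  have hq1mem : ∀ f ∈ μ, f.2 = q₁ → f = (p₁, q₁) ∨ f = (p₄, q₁) ∨ f = (p₅, q₁) := by
    intro f hf h2
    have h : f ∈ edgesH I.E q₁ := ⟨hμE hf, h2⟩
    rw [hQ1] at h; simpa using h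
  have hq2mem : ∀ f ∈ μ, f.2 = q₂ → f = (p₂, q₂) ∨ f = (p₃, q₂) ∨ f = (p₄, q₂) := by
    intro f hf h2
    have h : f ∈ edgesH I.E q₂ := ⟨hμE hf, h2⟩
    rw [hQ2] at h; simpa using h
  have hq3mem : ∀ f ∈ μ, f.2 = q₃ → f = (p₅, q₃) := by
    intro f hf h2
    have h : f ∈ edgesH I.E q₃ := ⟨hμE hf, h2⟩
    rw [hQ3] at h; simpa using h
  have hp4mem : ∀ f ∈ μ, f.1 = p₄ → f = (p₄, q₁) ∨ f = (p₄, q₂) := by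
    intro f hf h1
    have h : f ∈ edgesD I.E p₄ := ⟨hμE hf, h1⟩
    rw [hE4] at h; simpa using h
  have hp5mem : ∀ f ∈ μ, f.1 = p₅ → f = (p₅, q₁) ∨ f = (p₅, q₃) := by
    intro f hf h1
    have h : f ∈ edgesD I.E p₅ := ⟨hμE hf, h1⟩
    rw [hE5] at h; simpa using h
  -- mutual exclusivity
  have hn23 : ¬ ((p₂, q₂) ∈ μ ∧ (p₃, q₂) ∈ μ) := by
    rintro ⟨h2, h3⟩
    have := hmH _ h2 _ h3 rfl
    exact hp23 (congrArg Prod.fst this)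
  -- (p₁,q₁) excludes any edge of q₂ from μ leaving p₄ unmatched → (p₄,q₁) blocks
  have hn1x : ∀ g ∈ ({(p₂, q₂), (p₃, q₂)} : Set (D × H)),
      ¬ ((p₁, q₁) ∈ μ ∧ g ∈ μ) := by
    rintro g hg ⟨h1, hgμ⟩
    have hg2 : g.2 = q₂ := by rcases hg with rfl | rfl <;> rfl
    have hmu41 : (p₄, q₁) ∉ μ := by
      intro h
      exact hp14 (congrArg Prod.fst (hmH _ h1 _ h rfl))
    have hmu42 : (p₄, q₂) ∉ μ := by
      intro h
      have := hmH _ hgμ _ h (by rw [hg2])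
      rcases hg with rfl | rfl
      · exact hp24 (congrArg Prod.fst this)
      · exact hp34 (congrArg Prod.fst this)
    have h4n : muD μ p₄ = none := by
      apply muD_none'
      intro f hf hf1
      rcases hp4mem f hf hf1 with rfl | rfl
      · exact hmu41 hf
      · exact hmu42 hf
    have hH1 : muH μ q₁ = some (p₁, q₁) := muH_spec hmH h1 rfl
    refine hblock (p₄, q₁) ⟨he41, hmu41, ?_, ⟨?_, fun hS => absurd hS hq1S⟩, Or.inl ?_⟩
    · rw [h4n]; exact (I.prefD_none p₄ (p₄, q₁) ⟨he41, rfl⟩).1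
    · rw [hH1]; exact hq1a.2
    · show I.prefD p₄ _ (muD μ p₄) ∧ ¬ I.prefD p₄ (muD μ p₄) _
      rw [h4n]; exact I.prefD_none p₄ (p₄, q₁) ⟨he41, rfl⟩
  have hn12 : ¬ ((p₁, q₁) ∈ μ ∧ (p₂, q₂) ∈ μ) := hn1x (p₂, q₂) (by simp)
  have hn13 : ¬ ((p₁, q₁) ∈ μ ∧ (p₃, q₂) ∈ μ) := hn1x (p₃, q₂) (by simp)
  -- at least one of the three edges is in μ
  have hex : (p₁, q₁) ∈ μ ∨ (p₂, q₂) ∈ μ ∨ (p₃, q₂) ∈ μ := by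
    by_contra hcon
    push_neg at hcon
    obtain ⟨h1, h2, h3⟩ := hcon
    -- p₅ is matched
    have b5 : ∃ f ∈ μ, f.1 = p₅ := by
      by_contra hb
      push_neg at hb
      have h5n : muD μ p₅ = none := muD_none' hb
      have hq3n : muH μ q₃ = none := by
        apply muH_none'
        intro f hf hf2
        have := hq3mem f hf hf2
        exact hb f hf (by rw [this])
      have hmu53 : (p₅, q₃) ∉ μ := fun h => hb _ h rfl
      refine hblock (p₅, q₃) ⟨he53, hmu53, ?_, ⟨?_, fun hS => absurd hS hq3S⟩, Or.inl ?_⟩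
      · rw [h5n]; exact (I.prefD_none p₅ (p₅, q₃) ⟨he53, rfl⟩).1
      · rw [hq3n]; exact (I.prefH_none q₃ (p₅, q₃) ⟨he53, rfl⟩).1
      · show I.prefD p₅ _ (muD μ p₅) ∧ ¬ I.prefD p₅ (muD μ p₅) _
        rw [h5n]; exact I.prefD_none p₅ (p₅, q₃) ⟨he53, rfl⟩
    -- p₄ is matched
    have b4 : ∃ f ∈ μ, f.1 = p₄ := by
      by_contra hb
      push_neg at hb
      have h4n : muD μ p₄ = none := muD_none' hb
      have hq2n : muH μ q₂ = none := by
        apply muH_none'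
        intro f hf hf2
        rcases hq2mem f hf hf2 with rfl | rfl | rfl
        · exact h2 hf
        · exact h3 hf
        · exact hb _ hf rfl
      have hmu42 : (p₄, q₂) ∉ μ := fun h => hb _ h rfl
      refine hblock (p₄, q₂) ⟨he42, hmu42, ?_, ⟨?_, fun hS => absurd hS hq2S⟩, Or.inl ?_⟩
      · rw [h4n]; exact (I.prefD_none p₄ (p₄, q₂) ⟨he42, rfl⟩).1
      · rw [hq2n]; exact (I.prefH_none q₂ (p₄, q₂) ⟨he42, rfl⟩).1
      · show I.prefD p₄ _ (muD μ p₄) ∧ ¬ I.prefD p₄ (muD μ p₄) _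
        rw [h4n]; exact I.prefD_none p₄ (p₄, q₂) ⟨he42, rfl⟩
    obtain ⟨f4, hf4, hf41⟩ := b4
    obtain ⟨f5, hf5, hf51⟩ := b5
    rcases hp4mem f4 hf4 hf41 with rfl | rfl
    · -- (p₄,q₁) ∈ μ, so μ(p₅) = (p₅,q₃), and q₂ is empty: (p₄,q₂) blocks
      have h53 : (p₅, q₃) ∈ μ := by
        rcases hp5mem f5 hf5 hf51 with rfl | rfl
        · exact absurd (congrArg Prod.fst (hmH _ hf4 _ hf5 rfl)) hp45
        · exact hf5
      have hmu42 : (p₄, q₂) ∉ μ := by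
        intro h
        exact hq12 (congrArg Prod.snd (hmD _ hf4 _ h rfl))
      have hq2n : muH μ q₂ = none := by
        apply muH_none'
        intro f hf hf2
        rcases hq2mem f hf hf2 with rfl | rfl | rfl
        · exact h2 hf
        · exact h3 hf
        · exact hmu42 hf
      have h4s : muD μ p₄ = some (p₄, q₁) := muD_spec hmD hf4 rfl
      refine hblock (p₄, q₂) ⟨he42, hmu42, ?_, ⟨?_, fun hS => absurd hS hq2S⟩, Or.inr ⟨?_, fun hS => absurd hS hq2S⟩⟩
      · rw [h4s]; exact hp4.2
      · rw [hq2n]; exact (I.prefH_none q₂ (p₄, q₂) ⟨he42, rfl⟩).1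
      · show I.prefH q₂ _ (muH μ q₂) ∧ ¬ I.prefH q₂ (muH μ q₂) _
        rw [hq2n]; exact I.prefH_none q₂ (p₄, q₂) ⟨he42, rfl⟩
    · -- (p₄,q₂) ∈ μ
      rcases hp5mem f5 hf5 hf51 with rfl | rfl
      · -- (p₅,q₁) ∈ μ: (p₅,q₃) blocks
        have hmu53 : (p₅, q₃) ∉ μ := by
          intro h
          exact hq13 (congrArg Prod.snd (hmD _ hf5 _ h rfl))
        have hq3n : muH μ q₃ = none := by
          apply muH_none'
          intro f hf hf2
          have := hq3mem f hf hf2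
          subst this
          exact hmu53 hf
        have h5s : muD μ p₅ = some (p₅, q₁) := muD_spec hmD hf5 rfl
        refine hblock (p₅, q₃) ⟨he53, hmu53, ?_, ⟨?_, fun hS => absurd hS hq3S⟩, Or.inr ⟨?_, fun hS => absurd hS hq3S⟩⟩
        · rw [h5s]; exact hp5.2
        · rw [hq3n]; exact (I.prefH_none q₃ (p₅, q₃) ⟨he53, rfl⟩).1
        · show I.prefH q₃ _ (muH μ q₃) ∧ ¬ I.prefH q₃ (muH μ q₃) _
          rw [hq3n]; exact I.prefH_none q₃ (p₅, q₃) ⟨he53, rfl⟩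
      · -- (p₅,q₃) ∈ μ: q₁ empty, (p₄,q₁) blocks
        have hmu41 : (p₄, q₁) ∉ μ := by
          intro h
          exact hq12 (congrArg Prod.snd (hmD _ h _ hf4 rfl))
        have hmu51 : (p₅, q₁) ∉ μ := by
          intro h
          exact hq13 (congrArg Prod.snd (hmD _ h _ hf5 rfl))
        have hq1n : muH μ q₁ = none := by
          apply muH_none'
          intro f hf hf2
          rcases hq1mem f hf hf2 with rfl | rfl | rfl
          · exact h1 hf
          · exact hmu41 hf
          · exact hmu51 hf
        have h4s : muD μ p₄ = some (p₄, q₂) := muD_spec hmD hf4 rfl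
        refine hblock (p₄, q₁) ⟨he41, hmu41, ?_, ⟨?_, fun hS => absurd hS hq1S⟩, Or.inr ⟨?_, fun hS => absurd hS hq1S⟩⟩
        · rw [h4s]; exact hp4.1
        · rw [hq1n]; exact (I.prefH_none q₁ (p₄, q₁) ⟨he41, rfl⟩).1
        · show I.prefH q₁ _ (muH μ q₁) ∧ ¬ I.prefH q₁ (muH μ q₁) _
          rw [hq1n]; exact I.prefH_none q₁ (p₄, q₁) ⟨he41, rfl⟩
  -- conclude
  rcases hex with h1 | h2 | h3
  · exact Or.inl ⟨h1, fun h2 => hn12 ⟨h1, h2⟩, fun h3 => hn13 ⟨h1, h3⟩⟩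
  · exact Or.inr (Or.inl ⟨h2, fun h1 => hn12 ⟨h1, h2⟩, fun h3 => hn23 ⟨h2, h3⟩⟩)
  · exact Or.inr (Or.inr ⟨h3, fun h1 => hn13 ⟨h1, h3⟩, fun h2 => hn23 ⟨h2, h3⟩⟩)
end
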